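/- In a Poisson DAG model with non-degenerate rate functions, for a node j and S ⊆ Nd(j), equality E[X_j²] = E[E(X_j | X_S) + E(X_j | X_S)²] holds if and only if E(X_j | X_{Pa(j)}) is almost surely a measurable function of X_S; in particular, if Pa(j) ⊆ S then equality holds. -/

import Mathlib

open MeasureTheory Real

/-- In a Poisson DAG model with non-degenerate rates, equality
`E[X_j²] = E[E(X_j|X_S) + E(X_j|X_S)²]` holds iff `E(X_j|X_Pa)` is a.s. equal to its
`σ(X_S)`-measurable projection; in particular if `Pa(j) ⊆ S` equality holds. -/
theorem stmt_4 {Ω : Type*} {m0 : MeasurableSpace Ω} (μ : Measure Ω) [IsProbabilityMeasure μ]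
    (X : Ω → ℝ) (mPa mS : MeasurableSpace Ω) (hPa : mPa ≤ m0) (hS : mS ≤ m0)
    (hX : Integrable X μ) (hX2 : Integrable (fun ω => X ω ^ 2) μ)
    (hW2 : Integrable (fun ω => ((μ[X | mPa]) ω) ^ 2) μ)
    (hS2 : Integrable (fun ω => (μ[X | mS]) ω + ((μ[X | mS]) ω) ^ 2) μ)
    (hci : μ[X | mPa ⊔ mS] =ᵐ[μ] μ[X | mPa])
    (hpois : μ[(fun ω => X ω ^ 2) | mPa ⊔ mS]
        =ᵐ[μ] fun ω => (μ[X | mPa]) ω + ((μ[X | mPa]) ω) ^ 2) :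
    ((∫ ω, X ω ^ 2 ∂μ = ∫ ω, ((μ[X | mS]) ω + ((μ[X | mS]) ω) ^ 2) ∂μ) ↔
      μ[X | mPa] =ᵐ[μ] μ[(μ[X | mPa]) | mS]) ∧
    (mPa ≤ mS → ∫ ω, X ω ^ 2 ∂μ = ∫ ω, ((μ[X | mS]) ω + ((μ[X | mS]) ω) ^ 2) ∂μ) := by
  have hT : mPa ⊔ mS ≤ m0 := sup_le hPa hS
  set W : Ω → ℝ := μ[X | mPa] with hWdef
  set Z : Ω → ℝ := μ[X | mS] with hZdef
  set Y : Ω → ℝ := μ[W | mS] with hYdef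
  have hWint : Integrable W μ := integrable_condExp
  have hZint : Integrable Z μ := integrable_condExp
  have hYint : Integrable Y μ := integrable_condExp
  have hZ2 : Integrable (fun ω => Z ω ^ 2) μ := by
    have h := hS2.sub hZint
    refine h.congr (Filter.Eventually.of_forall fun ω => ?_)
    simp
  -- Z =ᵐ Y
  have hZY : Z =ᵐ[μ] Y := by
    have h1 : μ[μ[X | mPa ⊔ mS] | mS] =ᵐ[μ] Z := condExp_condExp_of_le le_sup_right hT
    have h2 : μ[μ[X | mPa ⊔ mS] | mS] =ᵐ[μ] Y := condExp_congr_ae hci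
    exact h1.symm.trans h2
  have hY2 : Integrable (fun ω => Y ω ^ 2) μ :=
    hZ2.congr (hZY.mono fun ω h => by simp [h])
  have hWmeas : @AEStronglyMeasurable Ω ℝ _ m0 m0 W μ :=
    (stronglyMeasurable_condExp.mono hPa).aestronglyMeasurable
  have hYmeas : @AEStronglyMeasurable Ω ℝ _ m0 m0 Y μ :=
    (stronglyMeasurable_condExp.mono hS).aestronglyMeasurable
  have hYW : Integrable (Y * W) μ := by
    refine Integrable.mono' (((hY2.add hW2).div_const 2)) (hYmeas.mul hWmeas)
      (Filter.Eventually.of_forall fun ω => ?_)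
    have h : |Y ω| * |W ω| ≤ (Y ω ^ 2 + W ω ^ 2) / 2 := by
      nlinarith [sq_nonneg (|Y ω| - |W ω|), sq_abs (Y ω), sq_abs (W ω)]
    simpa [Real.norm_eq_abs, abs_mul] using h
  -- key: ∫ Y*W = ∫ Y²
  have hmul : μ[Y * W | mS] =ᵐ[μ] Y * μ[W | mS] :=
    condExp_mul_of_stronglyMeasurable_left stronglyMeasurable_condExp hYW hWint
  have hkey : ∫ ω, Y ω * W ω ∂μ = ∫ ω, Y ω ^ 2 ∂μ := by
    have h1 : ∫ ω, (μ[Y * W | mS]) ω ∂μ = ∫ ω, (Y * W) ω ∂μ := integral_condExp hS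
    have h2 : ∫ ω, (μ[Y * W | mS]) ω ∂μ = ∫ ω, Y ω ^ 2 ∂μ := by
      refine integral_congr_ae (hmul.mono fun ω h => ?_)
      rw [h]
      show Y ω * (μ[W | mS]) ω = Y ω ^ 2
      rw [← hYdef]; ring
    exact h1.symm.trans h2
  have i1 : Integrable (fun ω => 2 * (Y ω * W ω)) μ := by
    have := hYW.const_mul 2
    exact this.congr (Filter.Eventually.of_forall fun ω => rfl)
  have i2 : Integrable (fun ω => W ω ^ 2 - 2 * (Y ω * W ω)) μ := hW2.sub i1
  -- Pythagoras
  have hDint : Integrable (fun ω => (W ω - Y ω) ^ 2) μ := by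
    refine (i2.add hY2).congr (Filter.Eventually.of_forall fun ω => ?_)
    simp only [Pi.add_apply]
    ring
  have hPyth : ∫ ω, (W ω - Y ω) ^ 2 ∂μ = (∫ ω, W ω ^ 2 ∂μ) - ∫ ω, Y ω ^ 2 ∂μ := by
    have h : ∫ ω, (W ω - Y ω) ^ 2 ∂μ
        = ∫ ω, (W ω ^ 2 - 2 * (Y ω * W ω) + Y ω ^ 2) ∂μ := by
      congr 1; funext ω; ring
    rw [h, integral_add i2 hY2, integral_sub hW2 i1, integral_const_mul, hkey]
    ring
  -- ∫W² = ∫Y² ↔ W =ᵐ Y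
  have hcrux : (∫ ω, W ω ^ 2 ∂μ = ∫ ω, Y ω ^ 2 ∂μ) ↔ W =ᵐ[μ] Y := by
    constructor
    · intro h
      have h0 : ∫ ω, (W ω - Y ω) ^ 2 ∂μ = 0 := by rw [hPyth, h, sub_self]
      have hae := (integral_eq_zero_iff_of_nonneg (fun ω => sq_nonneg _) hDint).mp h0
      filter_upwards [hae] with ω hω
      have h2 : (W ω - Y ω) ^ 2 = 0 := hω
      have h3 : W ω - Y ω = 0 := by
        exact pow_eq_zero_iff (n := 2) (by norm_num) |>.mp h2
      linarith
    · intro h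
      exact integral_congr_ae (h.mono fun ω hω => by simp [hω])
  -- main reductions
  have hEX2 : ∫ ω, X ω ^ 2 ∂μ = ∫ ω, (W ω + W ω ^ 2) ∂μ := by
    rw [← integral_condExp (f := fun ω => X ω ^ 2) hT]
    exact integral_congr_ae hpois
  have hEW : ∫ ω, W ω ∂μ = ∫ ω, X ω ∂μ := integral_condExp hPa
  have hEZ : ∫ ω, Z ω ∂μ = ∫ ω, X ω ∂μ := integral_condExp hS
  have hZY2 : ∫ ω, Z ω ^ 2 ∂μ = ∫ ω, Y ω ^ 2 ∂μ :=
    integral_congr_ae (hZY.mono fun ω h => by simp [h])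
  have hiff : (∫ ω, X ω ^ 2 ∂μ = ∫ ω, (Z ω + Z ω ^ 2) ∂μ) ↔ W =ᵐ[μ] Y := by
    rw [hEX2, integral_add hWint hW2, integral_add hZint hZ2, hEW, hEZ, hZY2, add_right_inj]
    exact hcrux
  refine ⟨hiff, fun hPaS => ?_⟩
  have hYW' : Y = W := condExp_of_stronglyMeasurable hS
    (stronglyMeasurable_condExp.mono hPaS) hWint
  exact hiff.mpr (by rw [hYW'])
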